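/- The normalizer of M in GL(V) equals M if and only if the dimensions dim_F U_1, …, dim_F U_r are pairwise distinct. -/

import Mathlib

section LeviAux

variable {F : Type*} [Field F] {V : Type*} [AddCommGroup V] [Module F V]
  {r : ℕ} {U : Fin r → Submodule F V}

/-- Projection family associated to an internal direct sum decomposition. -/
theorem levi_exists_proj (hU : DirectSum.IsInternal U) :
    ∃ p : ∀ i, V →ₗ[F] ↥(U i),
      (∀ i (u : ↥(U i)), p i ↑u = u) ∧
      (∀ i j, i ≠ j → ∀ u : ↥(U j), p i ↑u = 0) ∧
      (∀ v : V, ∑ i, ((p i v : V)) = v) := by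
  classical
  refine ⟨fun i => (DirectSum.component F (Fin r) (fun i => ↥(U i)) i) ∘ₗ
      ((LinearEquiv.ofBijective (DirectSum.coeLinearMap U) hU).symm :
        V →ₗ[F] DirectSum (Fin r) fun i => ↥(U i)), ?_, ?_, ?_⟩
  · intro i u
    simp only [LinearMap.coe_comp, Function.comp_apply, LinearEquiv.coe_coe]
    rw [← DirectSum.apply_eq_component]
    exact hU.ofBijective_coeLinearMap_of_mem u.2
  · intro i j hij u
    simp only [LinearMap.coe_comp, Function.comp_apply, LinearEquiv.coe_coe]
    rw [← DirectSum.apply_eq_component]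
    exact hU.ofBijective_coeLinearMap_of_mem_ne hij.symm u.2
  · intro v
    set e := LinearEquiv.ofBijective (DirectSum.coeLinearMap U) hU with he
    have h := congrArg (DirectSum.coeLinearMap U) (DirectSum.sum_univ_of (e.symm v))
    rw [map_sum] at h
    simp only [DirectSum.coeLinearMap_of] at h
    have h2 : DirectSum.coeLinearMap U (e.symm v) = v := e.apply_symm_apply v
    rw [h2] at h
    simp only [LinearMap.coe_comp, Function.comp_apply, LinearEquiv.coe_coe]
    exact h

theorem levi_map_eq_of (g : V ≃ₗ[F] V) (W : Submodule F V)
    (h1 : ∀ x ∈ W, g x ∈ W) (h2 : ∀ x ∈ W, g.symm x ∈ W) :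
    W.map (g : V →ₗ[F] V) = W := by
  apply le_antisymm
  · rintro _ ⟨x, hx, rfl⟩; exact h1 x hx
  · intro x hx; exact ⟨g.symm x, h2 x hx, g.apply_symm_apply x⟩

theorem levi_map_mul_eq (g h : V ≃ₗ[F] V) (pU : Submodule F V) :
    pU.map ((g * h : V ≃ₗ[F] V) : V →ₗ[F] V)
      = (pU.map (h : V →ₗ[F] V)).map (g : V →ₗ[F] V) := by
  rw [show ((g * h : V ≃ₗ[F] V) : V →ₗ[F] V)
      = (g : V →ₗ[F] V) ∘ₗ (h : V →ₗ[F] V) from rfl, Submodule.map_comp]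

/-- Extension of a block automorphism by the identity. -/
theorem levi_exists_blockAuto
    (p : ∀ i, V →ₗ[F] ↥(U i))
    (hp1 : ∀ i (u : ↥(U i)), p i ↑u = u)
    (hp2 : ∀ i j, i ≠ j → ∀ u : ↥(U j), p i ↑u = 0)
    (j : Fin r) (φ : ↥(U j) ≃ₗ[F] ↥(U j)) :
    ∃ g : V ≃ₗ[F] V,
      (∀ v : V, g v = v - ↑(p j v) + ↑(φ (p j v))) ∧
      (∀ i, (U i).map (g : V →ₗ[F] V) = U i) ∧
      (∀ u : ↥(U j), g ↑u = ↑(φ u)) := by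
  classical
  set mk : (↥(U j) ≃ₗ[F] ↥(U j)) → (V →ₗ[F] V) := fun ψ =>
    (LinearMap.id : V →ₗ[F] V) - (U j).subtype ∘ₗ p j
      + (U j).subtype ∘ₗ (ψ : ↥(U j) →ₗ[F] ↥(U j)) ∘ₗ p j with hmkdef
  have hmk : ∀ ψ (v : V), mk ψ v = v - ↑(p j v) + ↑(ψ (p j v)) := by
    intro ψ v
    simp [hmkdef, LinearMap.sub_apply, LinearMap.add_apply]
  have hpj : ∀ ψ (v : V), p j (mk ψ v) = ψ (p j v) := by
    intro ψ v
    rw [hmk]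
    rw [map_add, map_sub, hp1 j (p j v), hp1 j (ψ (p j v))]
    abel
  have hinv : ∀ ψ : ↥(U j) ≃ₗ[F] ↥(U j), (mk ψ.symm) ∘ₗ (mk ψ) = LinearMap.id := by
    intro ψ
    ext v
    simp only [LinearMap.comp_apply, LinearMap.id_apply]
    rw [hmk ψ.symm, hpj, hmk ψ, LinearEquiv.symm_apply_apply]
    abel
  have hinv2 : (mk φ) ∘ₗ (mk φ.symm) = LinearMap.id := by
    have := hinv φ.symm
    rwa [LinearEquiv.symm_symm] at this
  refine ⟨LinearEquiv.ofLinear (mk φ) (mk φ.symm) hinv2 (hinv φ), ?_, ?_, ?_⟩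
  · intro v
    rw [LinearEquiv.ofLinear_apply, hmk]
  · intro i
    rcases eq_or_ne i j with rfl | hij
    · apply levi_map_eq_of
      · intro x hx
        rw [LinearEquiv.ofLinear_apply, hmk, hp1 i ⟨x, hx⟩]
        have : x - ↑(⟨x, hx⟩ : ↥(U i)) = 0 := by simp
        rw [this, zero_add]
        exact (φ ⟨x, hx⟩).2
      · intro x hx
        rw [LinearEquiv.ofLinear_symm_apply, hmk, hp1 i ⟨x, hx⟩]
        have : x - ↑(⟨x, hx⟩ : ↥(U i)) = 0 := by simp
        rw [this, zero_add]
        exact (φ.symm ⟨x, hx⟩).2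
    · apply levi_map_eq_of
      · intro x hx
        rw [LinearEquiv.ofLinear_apply, hmk, hp2 j i (Ne.symm hij) ⟨x, hx⟩]
        simpa using hx
      · intro x hx
        rw [LinearEquiv.ofLinear_symm_apply, hmk, hp2 j i (Ne.symm hij) ⟨x, hx⟩]
        simpa using hx
  · intro u
    rw [LinearEquiv.ofLinear_apply, hmk, hp1 j u]
    simp

/-- A "swap" automorphism exchanging two blocks of equal data via `φ`. -/
theorem levi_exists_swapAuto
    (p : ∀ i, V →ₗ[F] ↥(U i))
    (hp1 : ∀ i (u : ↥(U i)), p i ↑u = u)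
    (hp2 : ∀ i j, i ≠ j → ∀ u : ↥(U j), p i ↑u = 0)
    {m m' : Fin r} (hmm : m ≠ m') (φ : ↥(U m) ≃ₗ[F] ↥(U m')) :
    ∃ g : V ≃ₗ[F] V,
      g * g = 1 ∧
      (U m).map (g : V →ₗ[F] V) = U m' ∧
      (U m').map (g : V →ₗ[F] V) = U m ∧
      (∀ i, i ≠ m → i ≠ m' → (U i).map (g : V →ₗ[F] V) = U i) := by
  classical
  set f : V →ₗ[F] V :=
    (LinearMap.id : V →ₗ[F] V) - (U m).subtype ∘ₗ p m - (U m').subtype ∘ₗ p m'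
      + (U m').subtype ∘ₗ (φ : ↥(U m) →ₗ[F] ↥(U m')) ∘ₗ p m
      + (U m).subtype ∘ₗ (φ.symm : ↥(U m') →ₗ[F] ↥(U m)) ∘ₗ p m' with hfdef
  have hf : ∀ v : V, f v = v - ↑(p m v) - ↑(p m' v) + ↑(φ (p m v)) + ↑(φ.symm (p m' v)) := by
    intro v
    simp [hfdef, LinearMap.sub_apply, LinearMap.add_apply]
  have hpm : ∀ v : V, p m (f v) = φ.symm (p m' v) := by
    intro v
    rw [hf, map_add, map_add, map_sub, map_sub,
      hp1 m (p m v), hp2 m m' hmm (p m' v), hp2 m m' hmm (φ (p m v)),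
      hp1 m (φ.symm (p m' v))]
    abel
  have hpm' : ∀ v : V, p m' (f v) = φ (p m v) := by
    intro v
    rw [hf, map_add, map_add, map_sub, map_sub,
      hp1 m' (p m' v), hp2 m' m (Ne.symm hmm) (p m v), hp2 m' m (Ne.symm hmm) (φ.symm (p m' v)),
      hp1 m' (φ (p m v))]
    abel
  have hff : f ∘ₗ f = LinearMap.id := by
    ext v
    simp only [LinearMap.comp_apply, LinearMap.id_apply]
    rw [hf (f v), hpm, hpm', hf v, LinearEquiv.apply_symm_apply, LinearEquiv.symm_apply_apply]
    abel
  set g : V ≃ₗ[F] V := LinearEquiv.ofLinear f f hff hff with hgdef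
  have hgapp : ∀ v : V, g v = f v := fun v => LinearEquiv.ofLinear_apply f f v
  have hgsymm : ∀ v : V, g.symm v = f v := fun v => LinearEquiv.ofLinear_symm_apply f f v
  have hmem_m : ∀ (x : V) (hx : x ∈ U m), g x = ↑(φ ⟨x, hx⟩) := by
    intro x hx
    rw [hgapp, hf, hp1 m ⟨x, hx⟩, hp2 m' m (Ne.symm hmm) ⟨x, hx⟩]
    simp
  have hmem_m' : ∀ (x : V) (hx : x ∈ U m'), g x = ↑(φ.symm ⟨x, hx⟩) := by
    intro x hx
    rw [hgapp, hf, hp1 m' ⟨x, hx⟩, hp2 m m' hmm ⟨x, hx⟩]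
    simp
  refine ⟨g, ?_, ?_, ?_, ?_⟩
  · apply LinearEquiv.toLinearMap_injective
    ext v
    have : (g * g) v = f (f v) := by
      show g (g v) = f (f v)
      rw [hgapp, hgapp]
    rw [LinearMap.ext_iff] at hff
    simpa [hgapp] using hff v
  · apply le_antisymm
    · rintro _ ⟨x, hx, rfl⟩
      show g x ∈ U m'
      rw [hmem_m x hx]
      exact (φ ⟨x, hx⟩).2
    · intro w hw
      refine ⟨↑(φ.symm ⟨w, hw⟩), (φ.symm ⟨w, hw⟩).2, ?_⟩
      show g ↑(φ.symm ⟨w, hw⟩) = w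
      rw [hmem_m _ (φ.symm ⟨w, hw⟩).2]
      simp
  · apply le_antisymm
    · rintro _ ⟨x, hx, rfl⟩
      show g x ∈ U m
      rw [hmem_m' x hx]
      exact (φ.symm ⟨x, hx⟩).2
    · intro w hw
      refine ⟨↑(φ ⟨w, hw⟩), (φ ⟨w, hw⟩).2, ?_⟩
      show g ↑(φ ⟨w, hw⟩) = w
      rw [hmem_m' _ (φ ⟨w, hw⟩).2]
      simp
  · intro i him him'
    apply levi_map_eq_of
    · intro x hx
      rw [hgapp, hf, hp2 m i (Ne.symm him) ⟨x, hx⟩, hp2 m' i (Ne.symm him') ⟨x, hx⟩]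
      simpa using hx
    · intro x hx
      rw [hgsymm, hf, hp2 m i (Ne.symm him) ⟨x, hx⟩, hp2 m' i (Ne.symm him') ⟨x, hx⟩]
      simpa using hx

/-- `GL(W)` is transitive on nonzero vectors. -/
theorem levi_exists_linEquiv_apply_eq {W : Type*} [AddCommGroup W] [Module F W]
    [FiniteDimensional F W] {x v : W} (hx : x ≠ 0) (hv : v ≠ 0) :
    ∃ φ : W ≃ₗ[F] W, φ x = v := by
  obtain ⟨C, hC⟩ := Submodule.exists_isCompl (Submodule.span F {x})
  obtain ⟨C', hC'⟩ := Submodule.exists_isCompl (Submodule.span F {v})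
  have hdim : Module.finrank F C = Module.finrank F C' := by
    have h1 := Submodule.finrank_add_eq_of_isCompl hC
    have h2 := Submodule.finrank_add_eq_of_isCompl hC'
    rw [finrank_span_singleton hx] at h1
    rw [finrank_span_singleton hv] at h2
    omega
  let e1 : ↥(Submodule.span F {x}) ≃ₗ[F] ↥(Submodule.span F {v}) :=
    (LinearEquiv.toSpanNonzeroSingleton F W x hx).symm.trans
      (LinearEquiv.toSpanNonzeroSingleton F W v hv)
  let e2 : ↥C ≃ₗ[F] ↥C' := LinearEquiv.ofFinrankEq _ _ hdim
  refine ⟨((Submodule.prodEquivOfIsCompl _ _ hC).symm.trans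
      ((e1.prodCongr e2).trans (Submodule.prodEquivOfIsCompl _ _ hC'))), ?_⟩
  have hxmem : x ∈ Submodule.span F {x} := Submodule.mem_span_singleton_self x
  have h1 : (Submodule.prodEquivOfIsCompl _ _ hC).symm x = (⟨x, hxmem⟩, 0) :=
    Submodule.prodEquivOfIsCompl_symm_apply_left _ _ hC ⟨x, hxmem⟩
  have h2 : e1 ⟨x, hxmem⟩ = ⟨v, Submodule.mem_span_singleton_self v⟩ := by
    show (LinearEquiv.toSpanNonzeroSingleton F W v hv)
      ((LinearEquiv.toSpanNonzeroSingleton F W x hx).symm ⟨x, hxmem⟩) = _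
    have : (LinearEquiv.toSpanNonzeroSingleton F W x hx).symm ⟨x, hxmem⟩ = 1 := by
      rw [LinearEquiv.symm_apply_eq]
      exact (LinearEquiv.toSpanNonzeroSingleton_one F W x hx).symm
    rw [this]
    exact LinearEquiv.toSpanNonzeroSingleton_one F W v hv
  have h3 : ∀ y : ↥(Submodule.span F {v}) × ↥C',
      (Submodule.prodEquivOfIsCompl _ _ hC') y = ↑y.1 + ↑y.2 := by
    intro y
    rw [← LinearEquiv.coe_coe, Submodule.coe_prodEquivOfIsCompl]
    rfl
  simp only [LinearEquiv.trans_apply, h1, LinearEquiv.prodCongr_apply]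
  rw [h2, map_zero, h3]
  simp

end LeviAux

/-- for `V = U_1 ⊕ ⋯ ⊕ U_r` a direct sum of nonzero subspaces and
`M ⊆ GL(V)` the subgroup of automorphisms preserving each `U_m` (a Levi subgroup),
the normalizer of `M` in `GL(V)` equals `M` iff the dimensions of the `U_m` are
pairwise distinct. -/
theorem stmt_9 (F : Type*) [Field F] [CharZero F]
    (V : Type*) [AddCommGroup V] [Module F V] [FiniteDimensional F V] [Nontrivial V]
    (r : ℕ) (hr : 1 ≤ r) (U : Fin r → Submodule F V)
    (hU : DirectSum.IsInternal U) (hUne : ∀ m, U m ≠ ⊥) :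
    (Subgroup.setNormalizer
        {g : V ≃ₗ[F] V | ∀ m, (U m).map (g : V →ₗ[F] V) = U m} : Set (V ≃ₗ[F] V)) =
      {g : V ≃ₗ[F] V | ∀ m, (U m).map (g : V →ₗ[F] V) = U m} ↔
    ∀ m m' : Fin r, m ≠ m' →
      Module.finrank F (U m) ≠ Module.finrank F (U m') := by
  classical
  obtain ⟨p, hp1, hp2, hp3⟩ := levi_exists_proj hU
  set S : Set (V ≃ₗ[F] V) :=
    {g : V ≃ₗ[F] V | ∀ m, (U m).map (g : V →ₗ[F] V) = U m} with hSdef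
  have hSmul : ∀ g h : V ≃ₗ[F] V, g ∈ S → h ∈ S → g * h ∈ S := by
    intro g h hg hh m
    rw [levi_map_mul_eq, hh m, hg m]
  have hS1 : (1 : V ≃ₗ[F] V) ∈ S := by
    intro m
    rw [show ((1 : V ≃ₗ[F] V) : V →ₗ[F] V) = LinearMap.id from rfl, Submodule.map_id]
  have hSinv : ∀ g : V ≃ₗ[F] V, g ∈ S → g⁻¹ ∈ S := by
    intro g hg m
    have h1 : (U m).map (((g⁻¹ * g) : V ≃ₗ[F] V) : V →ₗ[F] V) = U m := by
      rw [inv_mul_cancel]; exact hS1 m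
    rw [levi_map_mul_eq, hg m] at h1
    exact h1
  have hdisj : ∀ m m' : Fin r, m ≠ m' → Disjoint (U m) (U m') :=
    fun m m' h => hU.submodule_iSupIndep.pairwiseDisjoint h
  constructor
  · -- normalizer = M → dimensions pairwise distinct
    intro heq m m' hmm hrank
    let φ : ↥(U m) ≃ₗ[F] ↥(U m') := LinearEquiv.ofFinrankEq _ _ hrank
    obtain ⟨G, hGG, hGm, hGm', hGi⟩ := levi_exists_swapAuto p hp1 hp2 hmm φ
    have hGinv : G⁻¹ = G := inv_eq_of_mul_eq_one_right hGG
    have hGmap : ∀ n : V ≃ₗ[F] V, n ∈ S → G * n * G⁻¹ ∈ S := by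
      intro n hn i
      rw [hGinv, levi_map_mul_eq, levi_map_mul_eq]
      rcases eq_or_ne i m with rfl | him
      · rw [hGm, hn m', hGm']
      rcases eq_or_ne i m' with rfl | him'
      · rw [hGm', hn m, hGm]
      · rw [hGi i him him', hn i, hGi i him him']
    have hGnorm : G ∈ Subgroup.setNormalizer S := by
      show ∀ n : V ≃ₗ[F] V, n ∈ S ↔ G * n * G⁻¹ ∈ S
      intro n
      constructor
      · exact hGmap n
      · intro hn
        have h2 : G * (G * n * G⁻¹) * G⁻¹ = n := by
          rw [hGinv]
          calc G * (G * n * G) * G = (G * G) * n * (G * G) := by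
                simp [mul_assoc]
            _ = n := by rw [hGG, one_mul, mul_one]
        have h3 := hGmap _ hn
        rwa [h2] at h3
    have hGS : G ∈ S := by
      have h4 : G ∈ (↑(Subgroup.setNormalizer S) : Set (V ≃ₗ[F] V)) := hGnorm
      rwa [heq] at h4
    have h5 := hGS m
    rw [hGm] at h5
    have hd := hdisj m m' hmm
    rw [← h5] at hd
    exact hUne m' (le_bot_iff.mp (hd le_rfl le_rfl))
  · -- dimensions pairwise distinct → normalizer = M
    intro hdist
    apply Set.eq_of_subset_of_subset
    · intro g hg
      have hgiff : ∀ n : V ≃ₗ[F] V, n ∈ S ↔ g * n * g⁻¹ ∈ S := hg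
      have hconj : ∀ n : V ≃ₗ[F] V, n ∈ S → g⁻¹ * n * g ∈ S := by
        intro n hn
        rw [hgiff]
        have h0 : g * (g⁻¹ * n * g) * g⁻¹ = n := by group
        rwa [h0]
      set W : Fin r → Submodule F V := fun m => (U m).map (g : V →ₗ[F] V) with hWdef
      have hWinv : ∀ n : V ≃ₗ[F] V, n ∈ S → ∀ m, ∀ x ∈ W m, n x ∈ W m := by
        intro n hn m x hx
        have h1 : (U m).map ((n * g : V ≃ₗ[F] V) : V →ₗ[F] V)
            = (W m).map (n : V →ₗ[F] V) := levi_map_mul_eq n g (U m)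
        have h2 : n * g = g * (g⁻¹ * n * g) := by group
        rw [h2, levi_map_mul_eq, (hconj n hn) m] at h1
        have h3 : (W m).map (n : V →ₗ[F] V) = W m := h1.symm
        rw [← h3]
        exact ⟨x, hx, rfl⟩
      have hcompmem : ∀ m (w : V), w ∈ W m → ∀ j, ↑(p j w) ∈ W m := by
        intro m w hw j
        obtain ⟨gj, hgjf, hgjmaps, -⟩ :=
          levi_exists_blockAuto p hp1 hp2 j
            (LinearEquiv.smulOfNeZero F ↥(U j) 2 two_ne_zero)
        have hgjS : gj ∈ S := hgjmaps
        have h1 : gj w ∈ W m := hWinv gj hgjS m w hw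
        have h2 : gj w - w = ↑(p j w) := by
          rw [hgjf w]
          have h3 : (LinearEquiv.smulOfNeZero F ↥(U j) 2 two_ne_zero) (p j w)
              = (2 : F) • (p j w) := rfl
          rw [h3, Submodule.coe_smul, two_smul]
          abel
        rw [← h2]
        exact sub_mem h1 hw
      have hexists : ∀ m, ∃ j, U j ≤ W m := by
        intro m
        have hWne : W m ≠ ⊥ := by
          intro hbot
          apply hUne m
          rw [Submodule.eq_bot_iff]
          intro x hx
          have hgx : g x ∈ W m := ⟨x, hx, rfl⟩
          rw [hbot, Submodule.mem_bot] at hgx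
          exact g.map_eq_zero_iff.mp hgx
        obtain ⟨w, hw, hwne⟩ := Submodule.exists_mem_ne_zero_of_ne_bot hWne
        have hj : ∃ j, p j w ≠ 0 := by
          by_contra hall
          push_neg at hall
          apply hwne
          rw [← hp3 w]
          simp [hall]
        obtain ⟨j, hj⟩ := hj
        refine ⟨j, ?_⟩
        intro v hv
        rcases eq_or_ne v 0 with rfl | hvne
        · exact (W m).zero_mem
        obtain ⟨φ, hφ⟩ := levi_exists_linEquiv_apply_eq (F := F) (x := p j w)
          (v := (⟨v, hv⟩ : ↥(U j))) hj
          (fun h => hvne (congrArg Subtype.val h))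
        obtain ⟨H, -, hHmaps, hHblock⟩ := levi_exists_blockAuto p hp1 hp2 j φ
        have hHS : H ∈ S := hHmaps
        have hmem : (↑(p j w) : V) ∈ W m := hcompmem m w hw j
        have h6 := hWinv H hHS m _ hmem
        rw [hHblock (p j w), hφ] at h6
        exact h6
      choose σ hσ using hexists
      have hinj : Function.Injective σ := by
        intro a b hab
        by_contra hne
        have hd : Disjoint (W a) (W b) := by
          simp only [hWdef]
          rw [Submodule.disjoint_def]
          rintro x ⟨y, hy, rfl⟩ ⟨z, hz, hzx⟩
          have hzy : z = y := g.injective hzx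
          subst hzy
          have hz0 : z = 0 := (Submodule.disjoint_def.mp (hdisj a b hne)) z hy hz
          rw [hz0, map_zero]
        have h1 : U (σ a) ≤ W a := hσ a
        have h2 : U (σ a) ≤ W b := hab ▸ hσ b
        exact hUne (σ a) (le_bot_iff.mp (hd h1 h2))
      have hbij : Function.Bijective σ := Finite.injective_iff_bijective.mp hinj
      have hrankW : ∀ m, Module.finrank F ↥(W m) = Module.finrank F ↥(U m) :=
        fun m => LinearEquiv.finrank_map_eq g (U m)
      have hle : ∀ m, Module.finrank F ↥(U (σ m)) ≤ Module.finrank F ↥(W m) :=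
        fun m => Submodule.finrank_mono (hσ m)
      have hsum : ∑ m, Module.finrank F ↥(U (σ m)) = ∑ m, Module.finrank F ↥(W m) := by
        rw [show ∑ m, Module.finrank F ↥(U (σ m)) = ∑ m, Module.finrank F ↥(U m) from
          Equiv.sum_comp (Equiv.ofBijective σ hbij) (fun i => Module.finrank F ↥(U i))]
        exact Finset.sum_congr rfl fun m _ => (hrankW m).symm
      have heqrank : ∀ m, Module.finrank F ↥(U (σ m)) = Module.finrank F ↥(W m) := by
        intro m
        exact (Finset.sum_eq_sum_iff_of_le (fun i _ => hle i)).mp hsum m (Finset.mem_univ m)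
      have hWU : ∀ m, U (σ m) = W m :=
        fun m => Submodule.eq_of_le_of_finrank_eq (hσ m) (heqrank m)
      intro m
      show (U m).map (g : V →ₗ[F] V) = U m
      have hσm : σ m = m := by
        by_contra hne
        exact hdist (σ m) m hne ((heqrank m).trans (hrankW m))
      have h7 : (U m).map (g : V →ₗ[F] V) = W m := by simp only [hWdef]
      rw [h7, ← hWU m, hσm]
    · intro g hg
      show g ∈ Subgroup.setNormalizer S
      show ∀ n : V ≃ₗ[F] V, n ∈ S ↔ g * n * g⁻¹ ∈ S
      intro n
      constructor
      · intro hn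
        exact hSmul _ _ (hSmul _ _ hg hn) (hSinv g hg)
      · intro hn
        have h2 : g⁻¹ * (g * n * g⁻¹) * g = n := by group
        have h3 := hSmul _ _ (hSmul _ _ (hSinv g hg) hn) hg
        rwa [h2] at h3
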